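/- For every n >= 0, the number of n-step preimages of the size-2 triangular block with all entries equal to 1 under two-dimensional L-shaped rule 130 equals 2^{(n^2+5n)/2} * (4 - 3 * sum_{i=0}^{n} 2^{-i(i+3)/2}). -/

import Mathlib

/-- Local rule of 2D L-shaped rule 130: g(x; y, z)=1 iff (x,y,z)=(0,0,1) or (1,1,1),
where x is the top neighbour, y the cell, z the right neighbour. -/
def g130 (x y z : Bool) : Bool := (!x && !y && z) || (x && y && z)

/-- Block evolution operator on (padded) triangular blocks, 0-indexed:
c i j = g(b i (j+1); b i j, b (i+1) j).  Outside a size-r triangle all values are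
false, and g(0;y,0)=0, so this maps padded size-r triangles to padded size-(r-1)
triangles. -/
def gstep (b : ℕ → ℕ → Bool) : ℕ → ℕ → Bool :=
  fun i j => g130 (b i (j+1)) (b i j) (b (i+1) j)

/-- Padded triangular blocks of size r: entries live on {(i,j) : i+j < r} (0-indexed,
corresponding to 1-indexed i+j ≤ r+1), all other entries are false. -/
def Tri (r : ℕ) : Set (ℕ → ℕ → Bool) := {b | ∀ i j, r ≤ i + j → b i j = false}

/-- The padded size-2 triangle with top entry x, bottom-left y, bottom-right z. -/
def tri2 (x y z : Bool) : ℕ → ℕ → Bool := fun i j =>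
  if i = 0 ∧ j = 1 then x else if i = 0 ∧ j = 0 then y else if i = 1 ∧ j = 0 then z
  else false

/-- n-step preimage set of a size-2 triangle t: size-(n+2) triangles mapped to t by
n applications of the block evolution operator. -/
def preim2 (n : ℕ) (t : ℕ → ℕ → Bool) : Set (ℕ → ℕ → Bool) :=
  {b ∈ Tri (n+2) | gstep^[n] b = t}

namespace R130

def X (x : ℕ → Bool) : ℕ → Bool := fun j => x j == x (j+1)

lemma g130_true_iff (x y z : Bool) : g130 x y z = true ↔ z = true ∧ x = y := by
  revert x y z; decide

lemma g130_false_right (x y : Bool) : g130 x y false = false := by revert x y; decide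

lemma g130_true_right (x y : Bool) : g130 x y true = (x == y) := by revert x y; decide

lemma X_agree (m : ℕ) : ∀ (x y : ℕ → Bool) (p : ℕ),
    (∀ j, j ≤ p + m → x j = y j) → ∀ j, j ≤ p → X^[m] x j = X^[m] y j := by
  induction m with
  | zero => intro x y p h j hj; simpa using h j (by omega)
  | succ m ih =>
    intro x y p h j hj
    rw [Function.iterate_succ_apply, Function.iterate_succ_apply]
    refine ih (X x) (X y) p (fun j hj => ?_) j hj
    unfold X
    rw [h j (by omega), h (j+1) (by omega)]

lemma X_ones : X (fun _ => true) = fun _ => true := rfl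

lemma X_iter_ones (m : ℕ) : X^[m] (fun _ => true) = fun _ => true := by
  induction m with
  | zero => rfl
  | succ m ih => rw [Function.iterate_succ_apply, X_ones, ih]

lemma X_zero : X (fun _ => false) = fun _ => true := rfl

lemma X_iter_zero (m : ℕ) (hm : 1 ≤ m) : X^[m] (fun _ => false) = fun _ => true := by
  obtain ⟨m, rfl⟩ : ∃ m', m = m' + 1 := ⟨m - 1, by omega⟩
  rw [Function.iterate_succ_apply, X_zero, X_iter_ones]

lemma ones_fib : ∀ (s : ℕ) (x : ℕ → Bool), (∀ j, j ≤ s + 1 → x j = true) →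
    ∀ p, p ≤ 1 → X^[s] x p = true := by
  intro s
  induction s with
  | zero => intro x h p hp; simpa using h p (by omega)
  | succ s ih =>
    intro x h p hp
    rw [Function.iterate_succ_apply]
    refine ih (X x) (fun j hj => ?_) p hp
    unfold X; rw [h j (by omega), h (j+1) (by omega)]; rfl

lemma const_of_step (x : ℕ → Bool) (L : ℕ) (h : ∀ j, j < L → x (j+1) = x j) :
    ∀ j, j ≤ L → x j = x 0 := by
  intro j
  induction j with
  | zero => intro _; rfl
  | succ j ih => intro hj; rw [h j (by omega), ih (by omega)]

def AllT (b : ℕ → ℕ → Bool) (r : ℕ) : Prop := ∀ i j, i + j < r → b i j = true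
def Above (b : ℕ → ℕ → Bool) (k r : ℕ) : Prop := ∀ i j, k < i → i + j < r → b i j = true
def NotAll (b : ℕ → ℕ → Bool) (k r : ℕ) : Prop := ∃ j, k + j < r ∧ b k j = false
def Fib (n k : ℕ) (b : ℕ → ℕ → Bool) : Prop :=
  X^[n-k] (b k) 0 = true ∧ X^[n-k] (b k) 1 = true

lemma tri_step {b : ℕ → ℕ → Bool} {r : ℕ} (hb : b ∈ Tri (r+1)) : gstep b ∈ Tri r := by
  intro i j hij
  show g130 _ _ _ = false
  rw [hb (i+1) j (by omega), g130_false_right]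

lemma suff_all : ∀ (n : ℕ) (b : ℕ → ℕ → Bool), b ∈ Tri (n+2) → AllT b (n+2) →
    gstep^[n] b = tri2 true true true := by
  intro n
  induction n with
  | zero =>
    intro b hb hall
    funext i j
    simp only [Function.iterate_zero, id, tri2]
    split_ifs with h1 h2 h3
    · exact hall _ _ (by omega)
    · exact hall _ _ (by omega)
    · exact hall _ _ (by omega)
    · exact hb i j (by omega)
  | succ n ih =>
    intro b hb hall
    rw [Function.iterate_succ_apply]
    refine ih (gstep b) (tri_step hb) (fun i j hij => ?_)
    show g130 _ _ _ = true
    rw [g130_true_iff]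
    exact ⟨hall _ _ (by omega), by rw [hall _ _ (by omega), hall _ _ (by omega)]⟩



lemma suff_k : ∀ (n : ℕ), ∀ k ≤ n, ∀ (b : ℕ → ℕ → Bool), b ∈ Tri (n+2) →
    Above b k (n+2) → NotAll b k (n+2) → Fib n k b →
    gstep^[n] b = tri2 true true true := by
  intro n
  induction n with
  | zero =>
    intro k hk b _ _ hna hfib
    interval_cases k
    obtain ⟨j, hj, hf⟩ := hna
    obtain ⟨hf1, hf2⟩ := hfib
    simp only [Nat.sub_zero, Function.iterate_zero, id] at hf1 hf2
    rcases (by omega : j = 0 ∨ j = 1) with rfl | rfl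
    · simp [hf] at hf1
    · simp [hf] at hf2
  | succ n ih =>
    intro k hk b hb habove hna hfib
    rcases Nat.lt_or_ge k (n+1) with hk' | hk'
    · -- k ≤ n
      have hk2 : k ≤ n := by omega
      rw [Function.iterate_succ_apply]
      set c := gstep b with hc
      have hcTri : c ∈ Tri (n+2) := tri_step hb
      have habove' : Above c k (n+2) := by
        intro i j hki hij
        show g130 _ _ _ = true
        rw [g130_true_iff]
        exact ⟨habove _ _ (by omega) (by omega),
          by rw [habove _ _ (by omega) (by omega), habove _ _ (by omega) (by omega)]⟩
      have hrowc : ∀ j, k + j < n+2 → c k j = X (b k) j := by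
        intro j hj
        show g130 _ _ _ = X (b k) j
        rw [habove (k+1) j (by omega) (by omega), g130_true_right]
        unfold X
        cases b k j <;> cases b k (j+1) <;> rfl
      by_cases hzero : ∀ j, k + j < n+3 → b k j = false
      · have hbk : b k = fun _ => false := by
          funext j
          by_cases h : k + j < n + 3
          · exact hzero j h
          · exact hb k j (by omega)
        rcases Nat.eq_zero_or_pos k with rfl | hkpos
        · refine suff_all n c hcTri (fun i j hij => ?_)
          rcases Nat.eq_zero_or_pos i with rfl | hipos
          · rw [hrowc j (by omega), hbk]; rfl
          · exact habove' _ _ (by omega) hij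
        · obtain ⟨k', rfl⟩ : ∃ k', k = k' + 1 := ⟨k - 1, by omega⟩
          refine ih k' (by omega) c hcTri ?_ ?_ ?_
          · intro i j hki hij
            rcases Nat.lt_or_ge (k'+1) i with h | h
            · exact habove' _ _ h hij
            · have : i = k' + 1 := by omega
              subst this
              rw [hrowc j hij, hbk]; rfl
          · refine ⟨0, by omega, ?_⟩
            show g130 _ _ _ = false
            have : b (k'+1) 0 = false := by rw [hbk]
            rw [this, g130_false_right]
          · have hck' : c k' = fun _ => false := by
              funext j
              by_cases h : k' + j < n + 2
              · show g130 _ _ _ = false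
                have : b (k'+1) j = false := by rw [hbk]
                rw [this, g130_false_right]
              · exact hcTri k' j (by omega)
            constructor <;>
              · show X^[n - k'] (c k') _ = true
                rw [hck', X_iter_zero _ (by omega)]
      · push_neg at hzero
        obtain ⟨j0, hj0, hj0t⟩ := hzero
        replace hj0t : b k j0 = true := by revert hj0t; cases b k j0 <;> simp
        refine ih k hk2 c (tri_step hb) habove' ?_ ?_
        · by_contra hcon
          unfold NotAll at hcon
          push_neg at hcon
          have hconst : ∀ j, j < n + 2 - k → b k (j+1) = b k j := by
            intro j hj
            have h1' := hcon j (by omega)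
            have h1 : c k j = true := by revert h1'; cases c k j <;> simp
            rw [hrowc j (by omega)] at h1
            unfold X at h1
            cases hbj : b k j <;> cases hbj1 : b k (j+1) <;>
              rw [hbj, hbj1] at h1 <;> first | rfl | exact absurd h1 (by simp)
          have hcst := const_of_step (b k) (n+2-k) hconst
          obtain ⟨j1, hj1, hj1f⟩ := hna
          have e1 := hcst j0 (by omega)
          have e2 := hcst j1 (by omega)
          rw [hj0t] at e1; rw [hj1f] at e2
          rw [← e2] at e1
          exact absurd e1 (by simp)
        · have hag : ∀ p, p ≤ 1 → X^[n-k] (c k) p = X^[n-k] (X (b k)) p := by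
            intro p hp
            refine X_agree (n-k) _ _ 1 (fun j hj => ?_) p hp
            exact hrowc j (by omega)
          have hit : ∀ p, X^[n-k] (X (b k)) p = X^[n+1-k] (b k) p := by
            intro p
            have : n + 1 - k = (n - k) + 1 := by omega
            rw [this, Function.iterate_succ_apply]
          exact ⟨by rw [hag 0 (by omega), hit 0]; exact hfib.1,
                 by rw [hag 1 (by omega), hit 1]; exact hfib.2⟩
    · -- k = n+1
      have : k = n + 1 := by omega
      subst this
      obtain ⟨j, hj, hf⟩ := hna
      obtain ⟨hf1, hf2⟩ := hfib
      simp only [show n + 1 - (n+1) = 0 from by omega, Function.iterate_zero, id] at hf1 hf2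
      rcases (by omega : j = 0 ∨ j = 1) with rfl | rfl
      · simp [hf] at hf1
      · simp [hf] at hf2



lemma nec : ∀ (n : ℕ) (b : ℕ → ℕ → Bool), b ∈ Tri (n+2) →
    gstep^[n] b = tri2 true true true →
    AllT b (n+2) ∨ ∃ k, k ≤ n ∧ Above b k (n+2) ∧ NotAll b k (n+2) ∧ Fib n k b := by
  intro n
  induction n with
  | zero =>
    intro b _ h
    simp only [Function.iterate_zero, id] at h
    left
    intro i j hij
    subst h
    rcases (by omega : i = 0 ∧ j = 0 ∨ i = 0 ∧ j = 1 ∨ i = 1 ∧ j = 0) with ⟨rfl,rfl⟩|⟨rfl,rfl⟩|⟨rfl,rfl⟩ <;> rfl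
  | succ n ih =>
    intro b hb h
    rw [Function.iterate_succ_apply] at h
    have hcTri : gstep b ∈ Tri (n+2) := tri_step hb
    rcases ih (gstep b) hcTri h with hall | ⟨k, hk, hab, hna, hfib⟩
    · -- gstep b all true
      have key : ∀ i j, i + j < n + 2 → b (i+1) j = true ∧ b i (j+1) = b i j := by
        intro i j hij
        have := hall i j hij
        rw [show gstep b i j = g130 (b i (j+1)) (b i j) (b (i+1) j) from rfl,
          g130_true_iff] at this
        exact ⟨this.1, this.2⟩
      have h1 : ∀ i j, 1 ≤ i → i + j < n + 3 → b i j = true := by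
        intro i j h1 h2
        obtain ⟨i', rfl⟩ : ∃ i', i = i' + 1 := ⟨i - 1, by omega⟩
        exact (key i' j (by omega)).1
      have h0 : ∀ j, j < n + 2 → b 0 (j+1) = b 0 j := fun j hj => (key 0 j (by omega)).2
      by_cases hb00 : b 0 0 = true
      · left
        intro i j hij
        rcases Nat.eq_zero_or_pos i with rfl | hip
        · rw [const_of_step (b 0) (n+2) h0 j (by omega), hb00]
        · exact h1 i j hip hij
      · right
        refine ⟨0, by omega, fun i j hi hij => h1 i j hi hij, ⟨0, by omega, by
          revert hb00; cases b 0 0 <;> simp⟩, ?_⟩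
        have hb0 : b 0 = fun _ => false := by
          funext j
          by_cases hj : j ≤ n + 2
          · rw [const_of_step (b 0) (n+2) h0 j hj]
            revert hb00; cases b 0 0 <;> simp
          · exact hb 0 j (by omega)
        constructor <;>
          · show X^[n+1-0] (b 0) _ = true
            rw [hb0, X_iter_zero _ (by omega)]
    · -- witness k for gstep b
      have key : ∀ i j, k < i → i + j < n + 2 → b (i+1) j = true ∧ b i (j+1) = b i j := by
        intro i j hki hij
        have := hab i j hki hij
        rw [show gstep b i j = g130 (b i (j+1)) (b i j) (b (i+1) j) from rfl,
          g130_true_iff] at this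
        exact ⟨this.1, this.2⟩
      have hup : ∀ i j, k + 2 ≤ i → i + j < n + 3 → b i j = true := by
        intro i j h1 h2
        obtain ⟨i', rfl⟩ : ∃ i', i = i' + 1 := ⟨i - 1, by omega⟩
        exact (key i' j (by omega) (by omega)).1
      have hconst : ∀ j, j < n + 1 - k → b (k+1) (j+1) = b (k+1) j :=
        fun j hj => (key (k+1) j (by omega) (by omega)).2
      by_cases hb1 : b (k+1) 0 = true
      · -- row k+1 all true
        have htrue : ∀ j, (k+1) + j < n + 3 → b (k+1) j = true := by
          intro j hj
          rw [const_of_step (b (k+1)) (n+1-k) hconst j (by omega), hb1]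
        have hrowc : ∀ j, k + j < n + 2 → gstep b k j = X (b k) j := by
          intro j hj
          show g130 _ _ _ = X (b k) j
          rw [htrue j (by omega), g130_true_right]
          unfold X
          cases b k j <;> cases b k (j+1) <;> rfl
        right
        refine ⟨k, by omega, ?_, ?_, ?_⟩
        · intro i j hki hij
          rcases Nat.lt_or_ge i (k+2) with h' | h'
          · have : i = k + 1 := by omega
            subst this
            exact htrue j hij
          · exact hup i j h' hij
        · obtain ⟨j, hj, hjf⟩ := hna
          rw [hrowc j hj] at hjf
          unfold X at hjf
          cases hx : b k j
          · exact ⟨j, by omega, hx⟩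
          · refine ⟨j+1, by omega, ?_⟩
            rw [hx] at hjf
            cases hy : b k (j+1)
            · rfl
            · rw [hy] at hjf; exact absurd hjf (by decide)
        · have hag : ∀ p, p ≤ 1 → X^[n-k] (gstep b k) p = X^[n-k] (X (b k)) p := by
            intro p hp
            exact X_agree (n-k) _ _ 1 (fun j hj => hrowc j (by omega)) p hp
          obtain ⟨hf1, hf2⟩ := hfib
          constructor
          · show X^[n+1-k] (b k) 0 = true
            rw [show n+1-k = (n-k)+1 from by omega, Function.iterate_succ_apply,
              ← hag 0 (by omega)]
            exact hf1
          · show X^[n+1-k] (b k) 1 = true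
            rw [show n+1-k = (n-k)+1 from by omega, Function.iterate_succ_apply,
              ← hag 1 (by omega)]
            exact hf2
      · -- row k+1 all false
        have hb1f : b (k+1) 0 = false := by revert hb1; cases b (k+1) 0 <;> simp
        have hbk1 : b (k+1) = fun _ => false := by
          funext j
          by_cases hj : j ≤ n + 1 - k
          · rw [const_of_step (b (k+1)) (n+1-k) hconst j hj, hb1f]
          · exact hb (k+1) j (by omega)
        have hck : gstep b k = fun _ => false := by
          funext j
          by_cases hj : k + j < n + 2
          · show g130 _ _ _ = false
            have : b (k+1) j = false := by rw [hbk1]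
            rw [this, g130_false_right]
          · exact hcTri k j (by omega)
        have hkn : k < n := by
          by_contra hcon
          have hkeq : k = n := by omega
          obtain ⟨hf1, _⟩ := hfib
          rw [hck, hkeq] at hf1
          simp at hf1
        right
        refine ⟨k+1, by omega, fun i j hi hij => hup i j (by omega) hij,
          ⟨0, by omega, hb1f⟩, ?_⟩
        constructor <;>
          · show X^[n+1-(k+1)] (b (k+1)) _ = true
            rw [hbk1, X_iter_zero _ (by omega)]



def padSeq (L : ℕ) : Set (ℕ → Bool) := {x | ∀ j, L ≤ j → x j = false}

def padEquiv (L : ℕ) : padSeq L ≃ (Fin L → Bool) where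
  toFun x i := x.1 i
  invFun f := ⟨fun j => if h : j < L then f ⟨j, h⟩ else false, fun j hj => by
    simp only [dif_neg (by omega : ¬ j < L)]⟩
  left_inv x := by
    apply Subtype.ext
    funext j
    by_cases h : j < L
    · simp [h]
    · simp only [dif_neg h]
      exact (x.2 j (by omega)).symm
  right_inv f := by
    funext i
    simp [i.isLt]

instance padFinite (L : ℕ) : Finite (padSeq L) := Finite.of_equiv _ (padEquiv L).symm

lemma padSeq_finite (L : ℕ) : (padSeq L).Finite := Set.finite_coe_iff.mp (padFinite L)

def fiberS (m : ℕ) : Set (ℕ → Bool) :=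
  {x | (∀ j, m + 2 ≤ j → x j = false) ∧ X^[m] x 0 = true ∧ X^[m] x 1 = true}

lemma fiberS_subset (m : ℕ) : fiberS m ⊆ padSeq (m+2) := fun x hx => hx.1

lemma fiberS_finite (m : ℕ) : (fiberS m).Finite :=
  (padSeq_finite (m+2)).subset (fiberS_subset m)

def trunc (L : ℕ) (y : ℕ → Bool) : ℕ → Bool := fun j => if j < L then y j else false

lemma beq_beq (a c : Bool) : (a == (a == c)) = c := by revert a c; decide

def fiberRec (v : Bool) (y : ℕ → Bool) : ℕ → Bool :=
  fun j => Nat.rec v (fun i r => r == y i) j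

def fiberEquiv (m : ℕ) : fiberS (m+1) ≃ Bool × fiberS m where
  toFun x := ⟨x.1 0, ⟨trunc (m+2) (X x.1), by
    refine ⟨fun j hj => by simp only [trunc, if_neg (show ¬ j < m + 2 by omega)], ?_, ?_⟩
    · have : ∀ p, p ≤ 1 → X^[m] (trunc (m+2) (X x.1)) p = X^[m] (X x.1) p := by
        intro p hp
        refine X_agree m _ _ 1 (fun j hj => ?_) p hp
        simp [trunc, (by omega : j < m + 2)]
      rw [this 0 (by omega), ← Function.iterate_succ_apply]
      exact x.2.2.1
    · have : ∀ p, p ≤ 1 → X^[m] (trunc (m+2) (X x.1)) p = X^[m] (X x.1) p := by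
        intro p hp
        refine X_agree m _ _ 1 (fun j hj => ?_) p hp
        simp [trunc, (by omega : j < m + 2)]
      rw [this 1 (by omega), ← Function.iterate_succ_apply]
      exact x.2.2.2⟩⟩
  invFun vy :=
    ⟨fun j => if j < m + 3 then fiberRec vy.1 vy.2.1 j else false, by
      have hXagree : ∀ j, j ≤ m + 1 →
          X (fun j => if j < m + 3 then fiberRec vy.1 vy.2.1 j else false) j = vy.2.1 j := by
        intro j hj
        unfold X
        simp only [if_pos (by omega : j < m + 3), if_pos (by omega : j + 1 < m + 3)]
        show (fiberRec vy.1 vy.2.1 j == (fiberRec vy.1 vy.2.1 j == vy.2.1 j)) = vy.2.1 j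
        exact beq_beq _ _
      refine ⟨fun j hj => by simp only [if_neg (show ¬ j < m + 3 by omega)], ?_, ?_⟩
      · rw [Function.iterate_succ_apply]
        rw [X_agree m _ vy.2.1 1 (fun j hj => hXagree j (by omega)) 0 (by omega)]
        exact vy.2.2.2.1
      · rw [Function.iterate_succ_apply]
        rw [X_agree m _ vy.2.1 1 (fun j hj => hXagree j (by omega)) 1 (by omega)]
        exact vy.2.2.2.2⟩
  left_inv x := by
    apply Subtype.ext
    funext j
    by_cases hj : j < m + 3
    · simp only [if_pos hj]
      induction j with
      | zero => rfl
      | succ j ihj =>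
        show (fiberRec _ _ j == trunc (m+2) (X x.1) j) = x.1 (j+1)
        rw [ihj (by omega)]
        simp only [trunc, if_pos (by omega : j < m + 2)]
        show (x.1 j == (x.1 j == x.1 (j+1))) = x.1 (j+1)
        exact beq_beq _ _
    · simp only [if_neg hj]
      exact (x.2.1 j (by omega)).symm
  right_inv vy := by
    obtain ⟨v, y⟩ := vy
    refine Prod.ext rfl (Subtype.ext ?_)
    funext j
    show trunc (m+2) (X _) j = y.1 j
    by_cases hj : j < m + 2
    · simp only [trunc, if_pos hj]
      unfold X
      simp only [if_pos (by omega : j < m + 3), if_pos (by omega : j + 1 < m + 3)]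
      show (fiberRec v y.1 j == (fiberRec v y.1 j == y.1 j)) = y.1 j
      exact beq_beq _ _
    · simp only [trunc, if_neg hj]
      exact (y.2.1 j (by omega)).symm

lemma fiberS_zero : fiberS 0 = {fun j => decide (j < 2)} := by
  ext x
  simp only [fiberS, Set.mem_setOf_eq, Set.mem_singleton_iff, Function.iterate_zero, id]
  constructor
  · rintro ⟨hpad, h0, h1⟩
    funext j
    rcases (by omega : j = 0 ∨ j = 1 ∨ 2 ≤ j) with rfl | rfl | hj
    · rw [h0]; rfl
    · rw [h1]; rfl
    · rw [hpad j (by omega)]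
      simp [(show ¬ j < 2 by omega)]
  · rintro rfl
    exact ⟨fun j hj => by simp [(show ¬ j < 2 by omega)], rfl, rfl⟩

lemma fiberS_card (m : ℕ) : Nat.card (fiberS m) = 2 ^ m := by
  induction m with
  | zero =>
    rw [fiberS_zero]
    simp
  | succ m ih =>
    rw [Nat.card_congr (fiberEquiv m), Nat.card_prod, ih]
    simp [Nat.card_eq_fintype_card]
    ring



def xall (m : ℕ) : ℕ → Bool := fun j => decide (j < m + 2)

lemma xall_mem (m : ℕ) : xall m ∈ fiberS m := by
  refine ⟨fun j hj => by simp [xall, (show ¬ j < m + 2 by omega)], ?_, ?_⟩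
  · exact ones_fib m (xall m) (fun j hj => by simp [xall]; omega) 0 (by omega)
  · exact ones_fib m (xall m) (fun j hj => by simp [xall]; omega) 1 (by omega)

def fiberM (m : ℕ) : Set (ℕ → Bool) :=
  {x | x ∈ fiberS m ∧ ∃ j, j < m + 2 ∧ x j = false}

lemma fiberM_finite (m : ℕ) : (fiberM m).Finite :=
  (fiberS_finite m).subset (fun x hx => hx.1)

lemma fiberS_eq_insert (m : ℕ) : fiberS m = insert (xall m) (fiberM m) := by
  ext x
  constructor
  · intro hx
    by_cases h : ∃ j, j < m + 2 ∧ x j = false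
    · exact Set.mem_insert_of_mem _ ⟨hx, h⟩
    · push_neg at h
      left
      funext j
      by_cases hj : j < m + 2
      · have := h j hj
        have hxt : x j = true := by revert this; cases x j <;> simp
        rw [hxt]; simp [xall, hj]
      · rw [hx.1 j (by omega)]; simp [xall, hj]
  · rintro (rfl | hx)
    · exact xall_mem m
    · exact hx.1

lemma xall_not_mem (m : ℕ) : xall m ∉ fiberM m := by
  rintro ⟨-, j, hj, hf⟩
  simp [xall, hj] at hf

lemma fiberM_card (m : ℕ) : (fiberM m).ncard = 2 ^ m - 1 := by
  have h1 : (fiberS m).ncard = 2 ^ m := by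
    rw [← Nat.card_coe_set_eq, fiberS_card]
  rw [fiberS_eq_insert, Set.ncard_insert_of_notMem (xall_not_mem m) (fiberM_finite m)] at h1
  omega

def Ak (n k : ℕ) : Set (ℕ → ℕ → Bool) :=
  {b | b ∈ Tri (n+2) ∧ Above b k (n+2) ∧ NotAll b k (n+2) ∧ Fib n k b}

def AkEquiv (n k : ℕ) (hk : k ≤ n) :
    Ak n k ≃ fiberM (n - k) × (∀ i : Fin k, Fin (n + 2 - i.1) → Bool) where
  toFun b :=
    ⟨⟨b.1 k, by
      obtain ⟨hTri, hab, hna, hfib⟩ := b.2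
      refine ⟨⟨fun j hj => hTri k j (by omega), hfib.1, hfib.2⟩, ?_⟩
      obtain ⟨j, hj, hf⟩ := hna
      exact ⟨j, by omega, hf⟩⟩,
     fun i j => b.1 i.1 j.1⟩
  invFun xf :=
    ⟨fun i j =>
      if hik : i < k then (if hj : j < n + 2 - i then xf.2 ⟨i, hik⟩ ⟨j, hj⟩ else false)
      else if i = k then xf.1.1 j else decide (i + j < n + 2), by
      refine ⟨?_, ?_, ?_, ?_⟩
      · intro i j hij
        by_cases hik : i < k
        · simp only [dif_pos hik, dif_neg (show ¬ j < n + 2 - i by omega)]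
        · by_cases hik2 : i = k
          · simp only [dif_neg hik, if_pos hik2]
            subst hik2
            exact xf.1.2.1.1 j (by omega)
          · simp only [dif_neg hik, if_neg hik2]
            simp; omega
      · intro i j hki hij
        simp only [dif_neg (show ¬ i < k by omega), if_neg (show ¬ i = k by omega)]
        simp [hij]
      · obtain ⟨-, j, hj, hf⟩ := xf.1.2
        refine ⟨j, by omega, ?_⟩
        simp only [dif_neg (lt_irrefl k), if_pos rfl]
        exact hf
      · have hrow : (fun (i j : ℕ) =>
            if hik : i < k then (if hj : j < n + 2 - i then xf.2 ⟨i, hik⟩ ⟨j, hj⟩ else false)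
            else if i = k then xf.1.1 j else decide (i + j < n + 2)) k = xf.1.1 := by
          funext j
          simp [dif_neg (lt_irrefl k)]
        constructor
        · show X^[n-k] _ 0 = true
          rw [hrow]
          exact xf.1.2.1.2.1
        · show X^[n-k] _ 1 = true
          rw [hrow]
          exact xf.1.2.1.2.2⟩
  left_inv b := by
    apply Subtype.ext
    funext i j
    obtain ⟨hTri, hab, hna, hfib⟩ := b.2
    by_cases hik : i < k
    · simp only [dif_pos hik]
      by_cases hj : j < n + 2 - i
      · simp only [dif_pos hj]
      · simp only [dif_neg hj]
        exact (hTri i j (by omega)).symm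
    · by_cases hik2 : i = k
      · simp only [dif_neg hik, if_pos hik2]
        subst hik2
        rfl
      · simp only [dif_neg hik, if_neg hik2]
        by_cases hij : i + j < n + 2
        · rw [hab i j (by omega) hij]
          simp [hij]
        · rw [hTri i j (by omega)]
          simp [hij]
  right_inv xf := by
    obtain ⟨x, f⟩ := xf
    refine Prod.ext (Subtype.ext ?_) ?_
    · funext j
      simp [dif_neg (lt_irrefl k)]
    · funext i j
      simp only [dif_pos i.isLt, dif_pos j.isLt]

def triFun (r : ℕ) (f : Fin r → Fin r → Bool) : ℕ → ℕ → Bool :=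
  fun i j => if h : i < r ∧ j < r then f ⟨i, h.1⟩ ⟨j, h.2⟩ else false

lemma tri_subset_range (r : ℕ) : Tri r ⊆ Set.range (triFun r) := by
  intro b hb
  refine ⟨fun i j => b i.1 j.1, ?_⟩
  funext i j
  unfold triFun
  by_cases h : i < r ∧ j < r
  · simp only [dif_pos h]
  · simp only [dif_neg h]
    exact (hb i j (by omega)).symm

lemma tri_finite (r : ℕ) : (Tri r).Finite :=
  (Set.finite_range _).subset (tri_subset_range r)

lemma Ak_finite (n k : ℕ) : (Ak n k).Finite :=
  (tri_finite (n+2)).subset (fun b hb => hb.1)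

lemma Ak_card (n k : ℕ) (hk : k ≤ n) :
    (Ak n k).ncard = (2 ^ (n - k) - 1) * 2 ^ (∑ i ∈ Finset.range k, (n + 2 - i)) := by
  rw [← Nat.card_coe_set_eq, Nat.card_congr (AkEquiv n k hk), Nat.card_prod,
    Nat.card_coe_set_eq, fiberM_card]
  congr 1
  rw [Nat.card_eq_fintype_card, Fintype.card_pi]
  have : ∀ i : Fin k, Fintype.card (Fin (n + 2 - i.1) → Bool) = 2 ^ (n + 2 - i.1) := by
    intro i; simp
  rw [Finset.prod_congr rfl (fun i _ => this i), Finset.prod_pow_eq_pow_sum]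
  congr 1
  exact Fin.sum_univ_eq_sum_range _ k



def allones (n : ℕ) : ℕ → ℕ → Bool := fun i j => decide (i + j < n + 2)

lemma preim_decomp (n : ℕ) :
    preim2 n (tri2 true true true) =
      insert (allones n) (⋃ k ∈ Finset.range (n+1), Ak n k) := by
  ext b
  simp only [preim2, Set.mem_setOf_eq, Set.mem_insert_iff, Set.mem_iUnion,
    Finset.mem_range, exists_prop]
  constructor
  · rintro ⟨hTri, hmap⟩
    rcases nec n b hTri hmap with hall | ⟨k, hk, hab, hna, hfib⟩
    · left
      funext i j
      by_cases h : i + j < n + 2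
      · rw [hall i j h]; simp [allones, h]
      · rw [hTri i j (by omega)]; simp [allones, h]
    · right
      exact ⟨k, by omega, hTri, hab, hna, hfib⟩
  · rintro (rfl | ⟨k, hk, hTri, hab, hna, hfib⟩)
    · have hTri : allones n ∈ Tri (n+2) := by
        intro i j hij
        simp [allones]; omega
      exact ⟨hTri, suff_all n _ hTri (fun i j hij => by simp [allones, hij])⟩
    · exact ⟨hTri, suff_k n k (by omega) b hTri hab hna hfib⟩

lemma ncard_biUnion_range {α : Type*} (f : ℕ → Set α) (m : ℕ)
    (hfin : ∀ k, k < m → (f k).Finite)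
    (hdisj : ∀ k k', k < k' → k' < m → Disjoint (f k) (f k')) :
    (⋃ k ∈ Finset.range m, f k).ncard = ∑ k ∈ Finset.range m, (f k).ncard := by
  induction m with
  | zero => simp
  | succ m ih =>
    rw [Finset.range_add_one]
    rw [Finset.set_biUnion_insert]
    have hfinU : (⋃ k ∈ Finset.range m, f k).Finite := by
      apply Set.Finite.biUnion (Finset.finite_toSet _)
      intro k hk
      have : k < m := by simpa using hk
      exact hfin k (by omega)
    have hdisjU : Disjoint (f m) (⋃ k ∈ Finset.range m, f k) := by
      rw [Set.disjoint_right]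
      intro a ha
      simp only [Set.mem_iUnion, Finset.mem_range, exists_prop] at ha
      obtain ⟨k, hk, hak⟩ := ha
      intro ham
      exact Set.disjoint_left.mp (hdisj k m hk (by omega)) hak ham
    rw [Set.ncard_union_eq hdisjU (hfin m (by omega)) hfinU,
      ih (fun k hk => hfin k (by omega)) (fun k k' h1 h2 => hdisj k k' h1 (by omega)),
      Finset.sum_insert (by simp)]

lemma Ak_disjoint (n : ℕ) : ∀ k k', k < k' → k' < n + 1 → Disjoint (Ak n k) (Ak n k') := by
  intro k k' hkk hk'
  rw [Set.disjoint_left]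
  rintro b ⟨hTri, hab, hna, hfib⟩ ⟨hTri', hab', hna', hfib'⟩
  obtain ⟨j, hj, hf⟩ := hna'
  have := hab k' j hkk hj
  rw [this] at hf
  exact absurd hf (by decide)

lemma allones_not_mem (n : ℕ) : allones n ∉ ⋃ k ∈ Finset.range (n+1), Ak n k := by
  intro h
  simp only [Set.mem_iUnion, Finset.mem_range, exists_prop] at h
  obtain ⟨k, hk, -, -, ⟨j, hj, hf⟩, -⟩ := h
  simp [allones, hj] at hf

lemma preim_card (n : ℕ) :
    (preim2 n (tri2 true true true)).ncard =
      1 + ∑ k ∈ Finset.range (n+1),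
        (2 ^ (n - k) - 1) * 2 ^ (∑ i ∈ Finset.range k, (n + 2 - i)) := by
  rw [preim_decomp,
    Set.ncard_insert_of_notMem (allones_not_mem n)
      (Set.Finite.biUnion (Finset.finite_toSet _) (fun k _ => Ak_finite n k)),
    ncard_biUnion_range _ _ (fun k _ => Ak_finite n k) (Ak_disjoint n)]
  rw [Finset.sum_congr rfl (fun k hk => Ak_card n k (by simpa using Nat.lt_succ_iff.mp (Finset.mem_range.mp hk)))]
  omega



lemma two_dvd_i3 (i : ℕ) : 2 ∣ i * (i + 3) := by
  rcases Nat.even_or_odd i with ⟨c, hc⟩ | ⟨c, hc⟩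
  · exact ⟨c * (i + 3), by subst hc; ring⟩
  · exact ⟨i * (c + 2), by subst hc; ring⟩

lemma D_eq (i : ℕ) : 2 * (i * (i + 3) / 2) = i * (i + 3) :=
  Nat.mul_div_cancel' (two_dvd_i3 i)

lemma E_eq (n : ℕ) : 2 * ((n ^ 2 + 5 * n) / 2) = n ^ 2 + 5 * n := by
  obtain ⟨c, hc⟩ := two_dvd_i3 n
  have h : n ^ 2 + 5 * n = n * (n + 3) + 2 * n := by ring
  omega

lemma D_rec (i : ℕ) : (i+1) * ((i+1) + 3) / 2 = i * (i + 3) / 2 + i + 2 := by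
  have h1 := D_eq i
  have h2 := D_eq (i+1)
  have h3 : (i+1) * ((i+1) + 3) = i * (i + 3) + 2 * i + 4 := by ring
  omega

lemma key_sum (n : ℕ) : ∀ k, k ≤ n →
    (∑ j ∈ Finset.range k, (n + 2 - j)) + (n - k) + ((n - k) * ((n - k) + 3) / 2)
      = (n ^ 2 + 5 * n) / 2 := by
  intro k
  induction k with
  | zero =>
    intro _
    simp only [Finset.range_zero, Finset.sum_empty, Nat.sub_zero, zero_add]
    have h1 := D_eq n
    have h2 := E_eq n
    have h3 : n * (n + 3) + 2 * n = n ^ 2 + 5 * n := by ring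
    omega
  | succ k ih =>
    intro hk
    have hkn : k ≤ n := by omega
    have H := ih hkn
    rw [Finset.sum_range_succ]
    have e : n - k = (n - (k+1)) + 1 := by omega
    rw [e] at H
    have hr := D_rec (n - (k+1))
    omega

lemma D_top (n : ℕ) : (n+1) * ((n+1) + 3) / 2 = (n ^ 2 + 5 * n) / 2 + 2 := by
  have h1 := D_eq (n+1)
  have h2 := E_eq n
  have h3 : (n+1) * ((n+1) + 3) = n ^ 2 + 5 * n + 4 := by ring
  omega

end R130

theorem stmt13 (n : ℕ) :
    ((preim2 n (tri2 true true true)).ncard : ℝ) =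
      2 ^ ((n^2 + 5*n) / 2) *
        (4 - 3 * ∑ i ∈ Finset.range (n+1), (2:ℝ) ^ (-((i*(i+3)/2 : ℕ) : ℤ))) := by
  have h2 : (2:ℝ) ≠ 0 := two_ne_zero
  rw [R130.preim_card n]
  set E : ℕ := (n ^ 2 + 5 * n) / 2 with hE
  set Q : ℕ → ℕ := fun k => ∑ j ∈ Finset.range k, (n + 2 - j) with hQ
  set D : ℕ → ℕ := fun i => i * (i + 3) / 2 with hD
  -- cast the natural sum to ℝ, termwise
  have cast1 : ∀ k ∈ Finset.range (n+1),
      (((2 ^ (n - k) - 1) * 2 ^ (Q k) : ℕ) : ℝ)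
        = (2:ℝ) ^ ((n - k) + Q k) - (2:ℝ) ^ (Q k) := by
    intro k _
    have h1 : 1 ≤ 2 ^ (n - k) := Nat.one_le_two_pow
    rw [Nat.cast_mul, Nat.cast_sub h1, Nat.cast_pow, Nat.cast_pow]
    push_cast
    rw [pow_add]
    ring
  rw [Nat.cast_add, Nat.cast_sum, Finset.sum_congr rfl cast1]
  -- reflect the sum k ↦ n - k
  have refl1 := Finset.sum_range_reflect
    (fun k => (2:ℝ) ^ ((n - k) + Q k) - (2:ℝ) ^ (Q k)) (n+1)
  simp only [Nat.add_sub_cancel] at refl1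
  rw [← refl1]
  -- termwise identification
  have hterm : ∀ i ∈ Finset.range (n+1),
      (2:ℝ) ^ ((n - (n - i)) + Q (n - i)) - (2:ℝ) ^ (Q (n - i))
        = (2:ℝ) ^ E * (2:ℝ) ^ (-(D i : ℤ))
          - (2:ℝ) ^ E * ((2:ℝ) ^ (-(D (i+1) : ℤ)) * 4) := by
    intro i hi
    have hin : i ≤ n := by
      have := Finset.mem_range.mp hi; omega
    have hni : n - (n - i) = i := by omega
    have hk := R130.key_sum n (n - i) (by omega)
    rw [hni] at hk ⊢
    -- hk : Q (n-i) + i + D i = E  (after rewriting n - (n-i) = i)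
    have hk' : Q (n - i) + i + D i = E := hk
    have p1 : (2:ℝ) ^ (i + Q (n - i)) = (2:ℝ) ^ E * (2:ℝ) ^ (-(D i : ℤ)) := by
      have hmul : (2:ℝ) ^ (i + Q (n - i)) * (2:ℝ) ^ (D i) = (2:ℝ) ^ E := by
        rw [← pow_add]; congr 1; omega
      have hinv : (2:ℝ) ^ (-(D i : ℤ)) = ((2:ℝ) ^ (D i))⁻¹ := by
        rw [zpow_neg, zpow_natCast]
      rw [hinv, ← hmul, mul_assoc, mul_inv_cancel₀ (by positivity), mul_one]
    have p2 : (2:ℝ) ^ (Q (n - i)) = (2:ℝ) ^ E * ((2:ℝ) ^ (-(D (i+1) : ℤ)) * 4) := by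
      have hrec : D (i+1) = D i + i + 2 := R130.D_rec i
      have hmul : (2:ℝ) ^ (Q (n - i)) * (2:ℝ) ^ (i + D i) = (2:ℝ) ^ E := by
        rw [← pow_add]; congr 1; omega
      have hinv : ((2:ℝ) ^ (-(D (i+1) : ℤ)) * 4) = ((2:ℝ) ^ (i + D i))⁻¹ := by
        rw [hrec]
        rw [show (-((D i + i + 2 : ℕ) : ℤ)) = (-((i + D i : ℕ) : ℤ)) + (-2) from by
          push_cast; ring]
        rw [zpow_add₀ h2, ← zpow_natCast (2:ℝ) (i + D i), ← zpow_neg]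
        norm_num
        ring
      rw [hinv, ← hmul, mul_assoc, mul_inv_cancel₀ (by positivity), mul_one]
    rw [show (i + Q (n-i)) = (n - (n-i)) + Q (n-i) from by rw [hni]] at p1
    rw [hni] at p1
    rw [p1, p2]
  rw [Finset.sum_congr rfl hterm]
  rw [Finset.sum_sub_distrib, ← Finset.mul_sum, ← Finset.mul_sum, ← Finset.sum_mul]
  -- telescoping
  have tele := Finset.sum_range_sub' (fun i => (2:ℝ) ^ (-(D i : ℤ))) (n+1)
  -- tele : ∑ i in range (n+1), (2^(-D i) - 2^(-D (i+1))) = 2^(-D 0) - 2^(-D (n+1))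
  have hD0 : D 0 = 0 := rfl
  have hDtop : D (n+1) = E + 2 := R130.D_top n
  have hx : (2:ℝ) ^ E * (2:ℝ) ^ (-(D (n+1) : ℤ)) = 4⁻¹ := by
    rw [hDtop, ← zpow_natCast (2:ℝ) E, ← zpow_add₀ h2]
    rw [show ((E:ℤ) + -((E + 2 : ℕ) : ℤ)) = -2 from by push_cast; ring]
    norm_num
  have expand : ∑ i ∈ Finset.range (n+1),
      ((2:ℝ) ^ (-(D i : ℤ)) - (2:ℝ) ^ (-(D (i+1) : ℤ))) =
      ∑ i ∈ Finset.range (n+1), (2:ℝ) ^ (-(D i : ℤ))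
        - ∑ i ∈ Finset.range (n+1), (2:ℝ) ^ (-(D (i+1) : ℤ)) :=
    Finset.sum_sub_distrib _ _
  rw [expand] at tele
  rw [hD0] at tele
  simp only [Nat.cast_zero, neg_zero, zpow_zero] at tele
  -- Now pure algebra
  set S : ℝ := ∑ i ∈ Finset.range (n+1), (2:ℝ) ^ (-(D i : ℤ)) with hS
  set S' : ℝ := ∑ i ∈ Finset.range (n+1), (2:ℝ) ^ (-(D (i+1) : ℤ)) with hS'
  -- goal : 1 + (2^E * S - 2^E * (S' * 4)) = 2^E * (4 - 3 * S)
  -- tele : S - S' = 1 - 2^(-(D (n+1)))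
  have h4 : (2:ℝ) ^ E * (S - S') = (2:ℝ) ^ E - 4⁻¹ := by
    rw [tele, mul_sub, mul_one, hx]
  have hmul : (2:ℝ) ^ E * S' * 4 = (2:ℝ) ^ E * S * 4 - 4 * (2:ℝ) ^ E + 1 := by
    linear_combination (-4 : ℝ) * h4
  linear_combination -hmul
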